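/- In a connected split graph G with split partition V = K ∪ I, if x is a vertex of K with maximum degree among vertices of K, then {x} ∪ (I \ N(x)) is a minimum independent dominating set, so i(G) = 1 + |I| - deg_I(x). -/
import Mathlib


/-- `f` is an Independent Roman Dominating Function of `G`: values in {0,1,2},
every 0-labeled vertex has a 2-labeled neighbor, and no two adjacent vertices
are both positively labeled. -/
def IsIRDF {V : Type*} (G : SimpleGraph V) (f : V → ℕ) : Prop :=
  (∀ v, f v ≤ 2) ∧
  (∀ v, f v = 0 → ∃ u, G.Adj v u ∧ f u = 2) ∧
  (∀ u v, G.Adj u v → f u = 0 ∨ f v = 0)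

/-- The weight of a labeling. -/
def irdfWeight {V : Type*} [Fintype V] (f : V → ℕ) : ℕ := ∑ v, f v

/-- The independent Roman domination number. -/
noncomputable def iR {V : Type*} [Fintype V] (G : SimpleGraph V) : ℕ :=
  sInf {w | ∃ f : V → ℕ, IsIRDF G f ∧ irdfWeight f = w}

/-- `s` is an independent dominating set of `G`. -/
def IsIndepDom {V : Type*} (G : SimpleGraph V) (s : Finset V) : Prop :=
  (∀ u ∈ s, ∀ v ∈ s, ¬ G.Adj u v) ∧ (∀ v, v ∉ s → ∃ u ∈ s, G.Adj u v)

/-- The independent domination number. -/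
noncomputable def indepDomNum {V : Type*} [Fintype V] (G : SimpleGraph V) : ℕ :=
  sInf {n | ∃ s : Finset V, IsIndepDom G s ∧ s.card = n}

/-- in a connected split graph, for a maximum-degree vertex `x` of the
clique `K`, the set `{x} ∪ (I \ N(x))` is a minimum independent dominating set, and
`i(G) = 1 + |I| - deg_I(x)`. -/
theorem split_min_indep_dom {V : Type*} [Fintype V] [DecidableEq V]
    (G : SimpleGraph V) [DecidableRel G.Adj] (K I : Finset V)
    (hpart : K ∪ I = Finset.univ) (hdisj : Disjoint K I)
    (hK : ∀ u ∈ K, ∀ v ∈ K, u ≠ v → G.Adj u v)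
    (hI : ∀ u ∈ I, ∀ v ∈ I, ¬ G.Adj u v)
    (hconn : G.Connected)
    (x : V) (hx : x ∈ K) (hmax : ∀ y ∈ K, G.degree y ≤ G.degree x) :
    IsIndepDom G (insert x (I \ G.neighborFinset x)) ∧
    (insert x (I \ G.neighborFinset x)).card = indepDomNum G ∧
    indepDomNum G = 1 + I.card - (G.neighborFinset x ∩ I).card := by
  classical
  set S := insert x (I \ G.neighborFinset x) with hS
  have hKv : ∀ v : V, v ∉ K → v ∈ I := by
    intro v hv
    have : v ∈ K ∪ I := by rw [hpart]; exact Finset.mem_univ v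
    rcases Finset.mem_union.mp this with h | h
    · exact absurd h hv
    · exact h
  have hxI : x ∉ I := Finset.disjoint_left.mp hdisj hx
  have hmemS : ∀ v, v ∈ S ↔ v = x ∨ (v ∈ I ∧ ¬ G.Adj x v) := by
    intro v
    simp [hS, Finset.mem_insert, Finset.mem_sdiff, SimpleGraph.mem_neighborFinset]
  -- independence and domination of S
  have hindep : IsIndepDom G S := by
    constructor
    · intro u hu v hv
      rcases (hmemS u).1 hu with rfl | ⟨huI, hux⟩
      · rcases (hmemS v).1 hv with rfl | ⟨hvI, hvx⟩
        · exact G.irrefl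
        · exact hvx
      · rcases (hmemS v).1 hv with rfl | ⟨hvI, hvx⟩
        · intro h; exact hux h.symm
        · exact hI u huI v hvI
    · intro v hv
      refine ⟨x, Finset.mem_insert_self _ _, ?_⟩
      by_cases hvK : v ∈ K
      · have hne : v ≠ x := by rintro rfl; exact hv (Finset.mem_insert_self _ _)
        exact hK x hx v hvK hne.symm
      · have hvI : v ∈ I := hKv v hvK
        by_contra hadj
        exact hv ((hmemS v).2 (Or.inr ⟨hvI, hadj⟩))
  -- degree decomposition
  have hcardN : ∀ y ∈ K, G.degree y = (K.card - 1) + (G.neighborFinset y ∩ I).card := by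
    intro y hy
    have hNK : G.neighborFinset y ∩ K = K.erase y := by
      ext v
      simp only [Finset.mem_inter, SimpleGraph.mem_neighborFinset, Finset.mem_erase]
      constructor
      · rintro ⟨hadj, hvK⟩; exact ⟨(G.ne_of_adj hadj).symm, hvK⟩
      · rintro ⟨hne, hvK⟩; exact ⟨hK y hy v hvK hne.symm, hvK⟩
    have hsplit : G.neighborFinset y = (G.neighborFinset y ∩ K) ∪ (G.neighborFinset y ∩ I) := by
      rw [← Finset.inter_union_distrib_left, hpart, Finset.inter_univ]
    have hdisj2 : Disjoint (G.neighborFinset y ∩ K) (G.neighborFinset y ∩ I) :=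
      hdisj.mono Finset.inter_subset_right Finset.inter_subset_right
    have : G.degree y = (G.neighborFinset y).card := rfl
    rw [this]
    conv_lhs => rw [hsplit]
    rw [Finset.card_union_of_disjoint hdisj2, hNK, Finset.card_erase_of_mem hy]
  have hdegI : ∀ y ∈ K, (G.neighborFinset y ∩ I).card ≤ (G.neighborFinset x ∩ I).card := by
    intro y hy
    have h1 := hcardN y hy
    have h2 := hcardN x hx
    have h3 := hmax y hy
    omega
  have hsd : ∀ z : V, (I \ G.neighborFinset z).card = I.card - (G.neighborFinset z ∩ I).card := by
    intro z
    have h : I \ G.neighborFinset z = I \ (G.neighborFinset z ∩ I) := by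
      ext v
      simp only [Finset.mem_sdiff, Finset.mem_inter]
      tauto
    rw [h, Finset.card_sdiff_of_subset Finset.inter_subset_right]
  have hxnot : x ∉ I \ G.neighborFinset x := by
    intro h
    exact hxI (Finset.mem_sdiff.mp h).1
  have hScard : S.card = 1 + (I \ G.neighborFinset x).card := by
    rw [hS, Finset.card_insert_of_notMem hxnot]; omega
  have h4 : (G.neighborFinset x ∩ I).card ≤ I.card :=
    Finset.card_le_card Finset.inter_subset_right
  -- lower bound
  have hlow : ∀ s : Finset V, IsIndepDom G s → S.card ≤ s.card := by
    rintro s ⟨hsind, hsdom⟩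
    by_cases hsK : ∃ y ∈ s, y ∈ K
    · obtain ⟨y, hys, hyK⟩ := hsK
      have hsub : I \ G.neighborFinset y ⊆ s := by
        intro v hv
        rw [Finset.mem_sdiff, SimpleGraph.mem_neighborFinset] at hv
        by_contra hvs
        obtain ⟨u, hus, hadj⟩ := hsdom v hvs
        by_cases huK : u ∈ K
        · have huy : u = y := by
            by_contra hne
            exact hsind u hus y hys (hK u huK y hyK hne)
          exact hv.2 (huy ▸ hadj)
        · exact hI u (hKv u huK) v hv.1 hadj
      have hyni : y ∉ I \ G.neighborFinset y := by
        intro h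
        exact Finset.disjoint_left.mp hdisj hyK (Finset.mem_sdiff.mp h).1
      have hsub2 : insert y (I \ G.neighborFinset y) ⊆ s := Finset.insert_subset hys hsub
      have hcard2 := Finset.card_le_card hsub2
      rw [Finset.card_insert_of_notMem hyni] at hcard2
      have h1 := hsd x
      have h2 := hsd y
      have h3 := hdegI y hyK
      have h5 : (G.neighborFinset y ∩ I).card ≤ I.card :=
        Finset.card_le_card Finset.inter_subset_right
      rw [hScard]; omega
    · push_neg at hsK
      have hsI : ∀ v ∈ s, v ∈ I := fun v hv => hKv v (hsK v hv)
      have hIs : I ⊆ s := by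
        intro v hvI
        by_contra hvs
        obtain ⟨u, hus, hadj⟩ := hsdom v hvs
        exact hI u (hsI u hus) v hvI hadj
      have hxs : x ∉ s := fun h => hxI (hsI x h)
      obtain ⟨u, hus, hadj⟩ := hsdom x hxs
      have huI : u ∈ I := hsI u hus
      have hsub : I \ G.neighborFinset x ⊆ I.erase u := by
        intro v hv
        rw [Finset.mem_sdiff] at hv
        rw [Finset.mem_erase]
        refine ⟨?_, hv.1⟩
        rintro rfl
        exact hv.2 (SimpleGraph.mem_neighborFinset G x v |>.mpr hadj.symm)
      have hle := Finset.card_le_card hsub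
      rw [Finset.card_erase_of_mem huI] at hle
      have hcardI : I.card ≤ s.card := Finset.card_le_card hIs
      have hIpos : 1 ≤ I.card := Finset.card_pos.mpr ⟨u, huI⟩
      rw [hScard]; omega
  have hSin : S.card ∈ {n | ∃ s : Finset V, IsIndepDom G s ∧ s.card = n} := ⟨S, hindep, rfl⟩
  have h1 : indepDomNum G ≤ S.card := Nat.sInf_le hSin
  have h2 : S.card ≤ indepDomNum G := by
    apply le_csInf ⟨S.card, hSin⟩
    rintro n ⟨s, hs, rfl⟩
    exact hlow s hs
  have heq : S.card = indepDomNum G := le_antisymm h2 h1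
  refine ⟨hindep, heq, ?_⟩
  rw [← heq, hScard, hsd x]
  omega
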